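/- arXiv:2603.01709 — 2 statements merged into one kernel-verified Lean document; each statement's English description precedes it below -/
import Mathlib

section
/- Consider the ODE ż = S ∇H(z) − D(t) z, where S is a constant matrix with symmetric part negative semidefinite (in particular possibly skew-symmetric), H is C² with ∇H(0) = 0, and for all (z,t) the symmetric part of P_H(z) D(t) is positive semidefinite, where P_H(z) = ∫₀¹ ∇²H(sz) ds. Then along any solution z(t), the energy H(z(t)) is nonincreasing: d/dt H(z(t)) = ∇H(z)ᵀ S ∇H(z) − zᵀ sym(P_H(z) D(t)) z ≤ 0. -/
open Matrix

noncomputable def dotCLM {n : ℕ} (g : Fin n → ℝ) : (Fin n → ℝ) →L[ℝ] ℝ :=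
  ∑ i, g i • ContinuousLinearMap.proj i

/-- symmetric part of a matrix -/
noncomputable def symPart {n : ℕ} (A : Matrix (Fin n) (Fin n) ℝ) : Matrix (Fin n) (Fin n) ℝ :=
  (1/2 : ℝ) • (A + Aᵀ)

/-- The energy metric `P_H(z) = ∫₀¹ ∇²H(sz) ds` (defined entrywise). -/
noncomputable def energyMetric {n : ℕ}
    (hessH : (Fin n → ℝ) → Matrix (Fin n) (Fin n) ℝ) (z : Fin n → ℝ) :
    Matrix (Fin n) (Fin n) ℝ :=
  Matrix.of fun i j => ∫ s in (0:ℝ)..1, hessH (s • z) i j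

lemma dotCLM_apply {n : ℕ} (g v : Fin n → ℝ) : dotCLM g v = g ⬝ᵥ v := by
  simp [dotCLM, dotProduct, ContinuousLinearMap.sum_apply]

noncomputable def dotCLML {n : ℕ} : (Fin n → ℝ) →L[ℝ] ((Fin n → ℝ) →L[ℝ] ℝ) :=
  LinearMap.toContinuousLinearMap
    { toFun := dotCLM
      map_add' := fun g h => by ext v; simp [dotCLM_apply, add_dotProduct]
      map_smul' := fun c g => by ext v; simp [dotCLM_apply, smul_dotProduct] }

lemma hess_symm {n : ℕ} (H : (Fin n → ℝ) → ℝ)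
    (gradH : (Fin n → ℝ) → (Fin n → ℝ))
    (hessH : (Fin n → ℝ) → Matrix (Fin n) (Fin n) ℝ)
    (hgrad : ∀ z, HasFDerivAt H (dotCLM (gradH z)) z)
    (hhess : ∀ z, HasFDerivAt gradH
      (LinearMap.toContinuousLinearMap (Matrix.mulVecLin (hessH z))) z)
    (x : Fin n → ℝ) : (hessH x)ᵀ = hessH x := by
  have hfd : HasFDerivAt (fun y => dotCLM (gradH y))
      ((dotCLML (n := n)).comp
        (LinearMap.toContinuousLinearMap (Matrix.mulVecLin (hessH x)))) x :=
    (dotCLML.hasFDerivAt).comp x (hhess x)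
  have hsym := second_derivative_symmetric (𝕜 := ℝ) hgrad hfd
  ext i j
  have := hsym (Pi.single j 1) (Pi.single i 1)
  simpa [dotCLML, ContinuousLinearMap.comp_apply, dotCLM_apply,
    Matrix.mulVec_single, dotProduct_single, single_dotProduct] using this.symm

lemma grad_eq_energyMetric {n : ℕ}
    (gradH : (Fin n → ℝ) → (Fin n → ℝ))
    (hessH : (Fin n → ℝ) → Matrix (Fin n) (Fin n) ℝ)
    (hhess : ∀ z, HasFDerivAt gradH
      (LinearMap.toContinuousLinearMap (Matrix.mulVecLin (hessH z))) z)
    (hhessCont : Continuous hessH)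
    (hgrad0 : gradH 0 = 0)
    (z : Fin n → ℝ) :
    gradH z = (energyMetric hessH z).mulVec z := by
  funext i
  have hderiv : ∀ s : ℝ, HasDerivAt (fun s : ℝ => gradH (s • z) i)
      ((hessH (s • z)).mulVec z i) s := by
    intro s
    have h1 : HasDerivAt (fun s : ℝ => s • z) z s := by
      simpa using (hasDerivAt_id s).smul_const z
    have h2 : HasDerivAt (fun s : ℝ => gradH (s • z)) ((hessH (s • z)).mulVec z) s := by
      simpa [Matrix.mulVecLin, Function.comp_def] using (hhess (s • z)).comp_hasDerivAt s h1
    simpa [Function.comp_def] using ((ContinuousLinearMap.proj (R := ℝ) (φ := fun _ : Fin n => ℝ) i).hasFDerivAt).comp_hasDerivAt s h2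
  have hcont : Continuous fun s : ℝ => (hessH (s • z)).mulVec z i := by
    have : ∀ j, Continuous fun s : ℝ => hessH (s • z) i j := fun j =>
      ((continuous_apply j).comp (continuous_apply i)).comp
        (hhessCont.comp (continuous_id.smul continuous_const))
    simp only [Matrix.mulVec, dotProduct]
    exact continuous_finset_sum _ fun j _ => ((this j).mul continuous_const)
  have hFTC : ∫ s in (0:ℝ)..1, (hessH (s • z)).mulVec z i
      = gradH z i - gradH 0 i := by
    have := intervalIntegral.integral_eq_sub_of_hasDerivAt
      (f := fun s : ℝ => gradH (s • z) i)
      (f' := fun s : ℝ => (hessH (s • z)).mulVec z i)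
      (fun s _ => hderiv s) (hcont.intervalIntegrable 0 1)
    simpa using this
  have hswap : ∫ s in (0:ℝ)..1, (hessH (s • z)).mulVec z i
      = ∑ j, (∫ s in (0:ℝ)..1, hessH (s • z) i j) * z j := by
    have : ∀ s : ℝ, (hessH (s • z)).mulVec z i = ∑ j, hessH (s • z) i j * z j := by
      intro s; simp [Matrix.mulVec, dotProduct]
    rw [intervalIntegral.integral_congr (fun s _ => this s)]
    rw [intervalIntegral.integral_finset_sum]
    · exact Finset.sum_congr rfl fun j _ => intervalIntegral.integral_mul_const _ _
    · intro j _
      exact ((((continuous_apply j).comp (continuous_apply i)).comp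
        (hhessCont.comp (continuous_id.smul continuous_const))).mul continuous_const).intervalIntegrable 0 1
  rw [hgrad0] at hFTC
  simp only [Pi.zero_apply, sub_zero] at hFTC
  rw [← hFTC, hswap]
  simp [energyMetric, Matrix.mulVec, dotProduct]

lemma dot_symPart {n : ℕ} (A : Matrix (Fin n) (Fin n) ℝ) (x : Fin n → ℝ) :
    x ⬝ᵥ (symPart A).mulVec x = x ⬝ᵥ A.mulVec x := by
  have h : x ⬝ᵥ Aᵀ.mulVec x = x ⬝ᵥ A.mulVec x := by
    rw [Matrix.mulVec_transpose, dotProduct_comm, ← Matrix.dotProduct_mulVec]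
  simp [symPart, Matrix.smul_mulVec, Matrix.add_mulVec, dotProduct_add,
    dotProduct_smul, h, smul_eq_mul]
  ring

/-- for `ż = S∇H(z) − D(t)z` with `sym S ⪯ 0` and the ECLD condition
`sym(P_H(z)D(t)) ⪰ 0`, the energy decays:
`d/dt H(z(t)) = ∇H(z)ᵀ S ∇H(z) − zᵀ sym(P_H(z)D(t)) z ≤ 0`. -/
theorem stmt1 {n : ℕ} (H : (Fin n → ℝ) → ℝ)
    (gradH : (Fin n → ℝ) → (Fin n → ℝ))
    (hessH : (Fin n → ℝ) → Matrix (Fin n) (Fin n) ℝ)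
    (S : Matrix (Fin n) (Fin n) ℝ)
    (D : ℝ → Matrix (Fin n) (Fin n) ℝ)
    (hgrad : ∀ z, HasFDerivAt H (dotCLM (gradH z)) z)
    (hhess : ∀ z, HasFDerivAt gradH
      (LinearMap.toContinuousLinearMap (Matrix.mulVecLin (hessH z))) z)
    (hhessCont : Continuous hessH)
    (hgrad0 : gradH 0 = 0)
    (hS : ∀ x : Fin n → ℝ, x ⬝ᵥ (symPart S).mulVec x ≤ 0)
    (hECLD : ∀ (z : Fin n → ℝ) (t : ℝ),
      (symPart (energyMetric hessH z * D t)).PosSemidef)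
    (z : ℝ → (Fin n → ℝ))
    (hz : ∀ t, HasDerivAt z (S.mulVec (gradH (z t)) - (D t).mulVec (z t)) t) :
    ∀ t, HasDerivAt (fun t => H (z t))
        (gradH (z t) ⬝ᵥ S.mulVec (gradH (z t))
          - z t ⬝ᵥ (symPart (energyMetric hessH (z t) * D t)).mulVec (z t)) t
      ∧ gradH (z t) ⬝ᵥ S.mulVec (gradH (z t))
          - z t ⬝ᵥ (symPart (energyMetric hessH (z t) * D t)).mulVec (z t) ≤ 0 := by
  intro t
  set P := energyMetric hessH (z t) with hP
  have hPsym : Pᵀ = P := by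
    ext i j
    have hs : ∀ x, hessH x j i = hessH x i j := fun x =>
      congrFun (congrFun (hess_symm H gradH hessH hgrad hhess x) i) j
    simp only [hP, energyMetric, Matrix.transpose_apply, Matrix.of_apply]
    exact intervalIntegral.integral_congr fun s _ => hs _
  have hgradP : gradH (z t) = P.mulVec (z t) :=
    grad_eq_energyMetric gradH hessH hhess hhessCont hgrad0 (z t)
  -- rewrite the damping term
  have key : gradH (z t) ⬝ᵥ (D t).mulVec (z t)
      = z t ⬝ᵥ (symPart (P * D t)).mulVec (z t) := by
    rw [dot_symPart, hgradP, dotProduct_comm, Matrix.dotProduct_mulVec,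
      ← Matrix.mulVec_transpose, hPsym, Matrix.mulVec_mulVec, dotProduct_comm]
  constructor
  · have hd := (hgrad (z t)).comp_hasDerivAt t (hz t)
    have heq : dotCLM (gradH (z t)) (S.mulVec (gradH (z t)) - (D t).mulVec (z t))
        = gradH (z t) ⬝ᵥ S.mulVec (gradH (z t))
          - z t ⬝ᵥ (symPart (P * D t)).mulVec (z t) := by
      rw [dotCLM_apply, dotProduct_sub, key]
    rw [heq] at hd
    exact hd
  · have h1 : gradH (z t) ⬝ᵥ S.mulVec (gradH (z t)) ≤ 0 := by
      have := hS (gradH (z t))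
      rwa [dot_symPart] at this
    have h2 : 0 ≤ z t ⬝ᵥ (symPart (P * D t)).mulVec (z t) := by
      have := (hECLD (z t) t).dotProduct_mulVec_nonneg (z t)
      simpa using this
    linarith
end

section
/- Let Ψ₁ and Ψ₂ be invertible matrices such that Ψ₁ᵀ M Ψ₁ − M ⪯ 0 and M − Ψ₂⁻ᵀ M Ψ₂⁻¹ ⪯ 0 for a symmetric positive definite matrix M. Suppose the middle step of a splitting scheme preserves the quadratic-plus-scalar energy: ½ (z⁻)ᵀ M z⁻ + (r⁻)² = ½ (z⁺)ᵀ M z⁺ + (r⁺)², where z⁻ = Ψ₁ zⁿ, r⁻ = rⁿ, zⁿ⁺¹ = Ψ₂ z⁺, rⁿ⁺¹ = r⁺. Then the full step is energy-dissipative: ½ (zⁿ⁺¹)ᵀ M zⁿ⁺¹ + (rⁿ⁺¹)² ≤ ½ (zⁿ)ᵀ M zⁿ + (rⁿ)². -/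
open Matrix

def NegSemidef {m : Type*} [Fintype m] (A : Matrix m m ℝ) : Prop :=
  Aᵀ = A ∧ ∀ x : m → ℝ, x ⬝ᵥ A.mulVec x ≤ 0

lemma quad_congr {n : ℕ} (A B : Matrix (Fin n) (Fin n) ℝ) (x : Fin n → ℝ) :
    (B.mulVec x) ⬝ᵥ A.mulVec (B.mulVec x) = x ⬝ᵥ ((Bᵀ*A*B).mulVec x) := by
  rw [← mulVec_mulVec, ← mulVec_mulVec, dotProduct_mulVec x Bᵀ, vecMul_transpose]

/-- abstract energy stability of the splitting scheme. If
`Ψ₁ᵀMΨ₁ − M ⪯ 0`, `M − Ψ₂⁻ᵀMΨ₂⁻¹ ⪯ 0` for `M ≻ 0` with `Ψ₁, Ψ₂` invertible, and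
the middle step conserves `½ zᵀMz + r²`, then the full step
`z⁻ = Ψ₁zⁿ, r⁻ = rⁿ, zⁿ⁺¹ = Ψ₂z⁺, rⁿ⁺¹ = r⁺` is energy-dissipative. -/
theorem stmt13 {n : ℕ} (M Ψ₁ Ψ₂ : Matrix (Fin n) (Fin n) ℝ)
    (hMsymm : Mᵀ = M) (hMpd : M.PosDef)
    (hΨ₁ : IsUnit Ψ₁) (hΨ₂ : IsUnit Ψ₂)
    (h1 : NegSemidef (Ψ₁ᵀ * M * Ψ₁ - M))
    (h2 : NegSemidef (M - (Ψ₂⁻¹)ᵀ * M * Ψ₂⁻¹))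
    (zn zm zp zn1 : Fin n → ℝ) (rn rm rp rn1 : ℝ)
    (hzm : zm = Ψ₁.mulVec zn) (hrm : rm = rn)
    (hzn1 : zn1 = Ψ₂.mulVec zp) (hrn1 : rn1 = rp)
    (hmid : (1/2 : ℝ) * (zm ⬝ᵥ M.mulVec zm) + rm ^ 2
      = (1/2 : ℝ) * (zp ⬝ᵥ M.mulVec zp) + rp ^ 2) :
    (1/2 : ℝ) * (zn1 ⬝ᵥ M.mulVec zn1) + rn1 ^ 2
      ≤ (1/2 : ℝ) * (zn ⬝ᵥ M.mulVec zn) + rn ^ 2 := by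
  have hA : zm ⬝ᵥ M.mulVec zm ≤ zn ⬝ᵥ M.mulVec zn := by
    have := h1.2 zn
    rw [sub_mulVec, dotProduct_sub, sub_nonpos] at this
    rw [hzm, quad_congr]
    exact this
  have hzp : zp = (Ψ₂⁻¹).mulVec zn1 := by
    rw [hzn1, mulVec_mulVec, nonsing_inv_mul _ ((isUnit_iff_isUnit_det _).mp hΨ₂),
      one_mulVec]
  have hB : zn1 ⬝ᵥ M.mulVec zn1 ≤ zp ⬝ᵥ M.mulVec zp := by
    have := h2.2 zn1
    rw [sub_mulVec, dotProduct_sub, sub_nonpos] at this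
    rw [hzp, quad_congr]
    exact this
  rw [hrm] at hmid
  rw [hrn1]
  linarith
end
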